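/- Let k, k' ≥ 1 be natural numbers. If ε ≥ 0 is (k|k)-admissible and ε' ≥ 0 is (k'|k')-admissible, then ε·ε' is ((k+k')|(k+k'))-admissible. -/
import Mathlib


/-- `𝒜` is a union-closed family on the finite set `X`:
every member is a subset of `X`, `∅ ∈ 𝒜`, `X ∈ 𝒜`, and `𝒜` is closed under unions. -/
def UnionClosedOn (X : Finset ℕ) (𝒜 : Finset (Finset ℕ)) : Prop :=
  (∀ A ∈ 𝒜, A ⊆ X) ∧ ∅ ∈ 𝒜 ∧ X ∈ 𝒜 ∧ ∀ A₁ ∈ 𝒜, ∀ A₂ ∈ 𝒜, A₁ ∪ A₂ ∈ 𝒜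

/-- `𝒜` is `k|ℓ`-separated on `X`: `|X| ≥ k` and for any `k` distinct elements of `X`
(the first `ℓ` of them forming `T`, the remaining `k - ℓ` forming `U`)
there is `A ∈ 𝒜` containing all of `T` and disjoint from `U`. -/
def Separated (k ℓ : ℕ) (X : Finset ℕ) (𝒜 : Finset (Finset ℕ)) : Prop :=
  k ≤ X.card ∧
    ∀ T U : Finset ℕ, T ⊆ X → U ⊆ X → Disjoint T U → T.card = ℓ → U.card = k - ℓ →
      ∃ A ∈ 𝒜, T ⊆ A ∧ U ∩ A = ∅

/-- `ε ≥ 0` is `(k|ℓ)`-admissible: for every `k|ℓ`-separated union-closed family `𝒜` on a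
finite nonempty set `X` there is `S ⊆ X` with `|S| = k` such that at least `ε·|𝒜|`
members `A` of `𝒜` satisfy `|A ∩ S| ≥ ℓ`. -/
def Admissible (k ℓ : ℕ) (ε : ℝ) : Prop :=
  0 ≤ ε ∧
    ∀ (X : Finset ℕ) (𝒜 : Finset (Finset ℕ)), X.Nonempty → UnionClosedOn X 𝒜 →
      Separated k ℓ X 𝒜 →
        ∃ S ⊆ X, S.card = k ∧
          ε * (𝒜.card : ℝ) ≤ (((𝒜.filter fun A => ℓ ≤ (A ∩ S).card)).card : ℝ)

theorem stmt3 (k k' : ℕ) (hk : 1 ≤ k) (hk' : 1 ≤ k')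
    (ε ε' : ℝ) (hε : 0 ≤ ε) (hε' : 0 ≤ ε')
    (h : Admissible k k ε) (h' : Admissible k' k' ε') :
    Admissible (k + k') (k + k') (ε * ε') := by
  obtain ⟨-, h2⟩ := h
  obtain ⟨-, h2'⟩ := h'
  refine ⟨mul_nonneg hε hε', ?_⟩
  intro X 𝒜 hXne hUC hSep
  obtain ⟨hcard, hsep⟩ := hSep
  obtain ⟨hsubX, hempty, hXmem, hunion⟩ := hUC
  -- Step 1: 𝒜 is k|k separated
  have hSep1 : Separated k k X 𝒜 := by
    refine ⟨le_trans (Nat.le_add_right k k') hcard, ?_⟩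
    intro T U hT hU hdisj hTc hUc
    have hU0 : U = ∅ := Finset.card_eq_zero.mp (by omega)
    obtain ⟨T₂, hT₂sub, hT₂X, hT₂c⟩ := Finset.exists_subsuperset_card_eq hT (by omega) hcard
    obtain ⟨A, hA, hTA, -⟩ := hsep T₂ ∅ hT₂X (Finset.empty_subset X)
      (Finset.disjoint_empty_right _) hT₂c (by simp)
    exact ⟨A, hA, hT₂sub.trans hTA, by simp [hU0]⟩
  obtain ⟨S, hSX, hScard, hScount⟩ := h2 X 𝒜 hXne ⟨hsubX, hempty, hXmem, hunion⟩ hSep1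
  set 𝒜S := 𝒜.filter (fun A => k ≤ (A ∩ S).card) with h𝒜S
  have hmemAS : ∀ A, A ∈ 𝒜S ↔ A ∈ 𝒜 ∧ S ⊆ A := by
    intro A
    simp only [h𝒜S, Finset.mem_filter, and_congr_right_iff]
    intro _
    constructor
    · intro hle
      have hAS : A ∩ S = S :=
        Finset.eq_of_subset_of_card_le Finset.inter_subset_right (by omega)
      intro x hx
      exact (Finset.mem_inter.mp (hAS ▸ hx)).1
    · intro hsub
      have hAS : A ∩ S = S := Finset.inter_eq_right.mpr hsub
      rw [hAS, hScard]
  set X' := X \ S with hX'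
  set ℬ' := 𝒜S.image (fun A => A \ S) with hℬ'
  set ℬ := insert (∅ : Finset ℕ) ℬ' with hℬ
  have hX'card : X'.card = X.card - k := by rw [hX', Finset.card_sdiff_of_subset hSX, hScard]
  have hX'k : k' ≤ X'.card := by omega
  have hX'ne : X'.Nonempty := Finset.card_pos.mp (by omega)
  have hBsub : ∀ B ∈ ℬ, B ⊆ X' := by
    intro B hB
    rcases Finset.mem_insert.mp hB with rfl | hB
    · exact Finset.empty_subset _
    · obtain ⟨A, hA, rfl⟩ := Finset.mem_image.mp hB
      exact Finset.sdiff_subset_sdiff (hsubX A ((hmemAS A).mp hA).1) le_rfl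
  have hUC' : UnionClosedOn X' ℬ := by
    refine ⟨hBsub, Finset.mem_insert_self _ _, ?_, ?_⟩
    · exact Finset.mem_insert_of_mem
        (Finset.mem_image.mpr ⟨X, (hmemAS X).mpr ⟨hXmem, hSX⟩, rfl⟩)
    · intro B₁ hB₁ B₂ hB₂
      rcases Finset.mem_insert.mp hB₁ with rfl | hB₁
      · simpa using hB₂
      rcases Finset.mem_insert.mp hB₂ with rfl | hB₂
      · rw [Finset.union_empty]; exact Finset.mem_insert_of_mem hB₁
      obtain ⟨A₁, hA₁, rfl⟩ := Finset.mem_image.mp hB₁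
      obtain ⟨A₂, hA₂, rfl⟩ := Finset.mem_image.mp hB₂
      refine Finset.mem_insert_of_mem (Finset.mem_image.mpr ⟨A₁ ∪ A₂, ?_, ?_⟩)
      · exact (hmemAS _).mpr ⟨hunion _ ((hmemAS _).mp hA₁).1 _ ((hmemAS _).mp hA₂).1,
          ((hmemAS _).mp hA₁).2.trans Finset.subset_union_left⟩
      · simp [Finset.union_sdiff_distrib]
  have hSep' : Separated k' k' X' ℬ := by
    refine ⟨hX'k, ?_⟩
    intro T U hT hU hdisj hTc hUc
    have hU0 : U = ∅ := Finset.card_eq_zero.mp (by omega)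
    have hTS : Disjoint T S := by
      refine Finset.disjoint_left.mpr fun x hx hxS => ?_
      exact (Finset.mem_sdiff.mp (hT hx)).2 hxS
    obtain ⟨A, hA, hTA, -⟩ := hsep (T ∪ S) ∅
      (Finset.union_subset (hT.trans Finset.sdiff_subset) hSX)
      (Finset.empty_subset X) (Finset.disjoint_empty_right _)
      (by rw [Finset.card_union_of_disjoint hTS, hTc, hScard, Nat.add_comm]) (by simp)
    refine ⟨A \ S, Finset.mem_insert_of_mem (Finset.mem_image.mpr
      ⟨A, (hmemAS A).mpr ⟨hA, Finset.subset_union_right.trans hTA⟩, rfl⟩), ?_, by simp [hU0]⟩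
    intro x hx
    exact Finset.mem_sdiff.mpr ⟨hTA (Finset.mem_union_left _ hx),
      fun hxS => Finset.disjoint_left.mp hTS hx hxS⟩
  obtain ⟨S', hS'X', hS'card, hS'count⟩ := h2' X' ℬ hX'ne hUC' hSep'
  have hdisjSS' : Disjoint S S' := by
    refine Finset.disjoint_right.mpr fun x hx hxS => ?_
    exact (Finset.mem_sdiff.mp (hS'X' hx)).2 hxS
  have hinj : Set.InjOn (fun A => A \ S) ↑𝒜S := by
    intro A₁ hA₁ A₂ hA₂ hEq
    have h₁ := ((hmemAS A₁).mp (Finset.mem_coe.mp hA₁)).2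
    have h₂ := ((hmemAS A₂).mp (Finset.mem_coe.mp hA₂)).2
    calc A₁ = A₁ \ S ∪ S := (Finset.sdiff_union_of_subset h₁).symm
    _ = A₂ \ S ∪ S := by simp only at hEq; rw [hEq]
    _ = A₂ := Finset.sdiff_union_of_subset h₂
  -- the final filter count inequality
  have hfin : (ℬ.filter fun B => k' ≤ (B ∩ S').card).card ≤
      (𝒜.filter fun A => k + k' ≤ (A ∩ (S ∪ S')).card).card := by
    apply Finset.card_le_card_of_injOn (fun B => B ∪ S)
    · intro B hB
      obtain ⟨hBℬ, hBS'⟩ := Finset.mem_filter.mp hB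
      have hS'B : S' ⊆ B := by
        have hBS : B ∩ S' = S' :=
          Finset.eq_of_subset_of_card_le Finset.inter_subset_right (by omega)
        intro x hx
        exact (Finset.mem_inter.mp (hBS ▸ hx)).1
      have hBne : B ≠ ∅ := by
        intro h0
        rw [h0] at hS'B
        have : S'.card = 0 := Finset.card_eq_zero.mpr (Finset.subset_empty.mp hS'B)
        omega
      rcases Finset.mem_insert.mp hBℬ with rfl | hB'
      · exact absurd rfl hBne
      obtain ⟨A, hA, rfl⟩ := Finset.mem_image.mp hB'
      obtain ⟨hA𝒜, hSA⟩ := (hmemAS A).mp hA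
      simp only [Finset.sdiff_union_of_subset hSA]
      refine Finset.mem_filter.mpr ⟨hA𝒜, ?_⟩
      have hsub : S ∪ S' ⊆ A ∩ (S ∪ S') := by
        intro x hx
        refine Finset.mem_inter.mpr ⟨?_, hx⟩
        rcases Finset.mem_union.mp hx with hx | hx
        · exact hSA hx
        · exact (Finset.mem_sdiff.mp (hS'B hx)).1
      calc k + k' = (S ∪ S').card := by
            rw [Finset.card_union_of_disjoint hdisjSS', hScard, hS'card]
      _ ≤ (A ∩ (S ∪ S')).card := Finset.card_le_card hsub
    · intro B₁ hB₁ B₂ hB₂ hEq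
      have d₁ : Disjoint B₁ S :=
        (Finset.sdiff_disjoint).mono_left (hBsub B₁ (Finset.mem_filter.mp hB₁).1)
      have d₂ : Disjoint B₂ S :=
        (Finset.sdiff_disjoint).mono_left (hBsub B₂ (Finset.mem_filter.mp hB₂).1)
      calc B₁ = (B₁ ∪ S) \ S := by
            rw [Finset.union_sdiff_distrib, Finset.sdiff_self, Finset.union_empty,
              Finset.sdiff_eq_self_of_disjoint d₁]
      _ = (B₂ ∪ S) \ S := by simp only at hEq; rw [hEq]
      _ = B₂ := by
            rw [Finset.union_sdiff_distrib, Finset.sdiff_self, Finset.union_empty,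
              Finset.sdiff_eq_self_of_disjoint d₂]
  refine ⟨S ∪ S', Finset.union_subset hSX (hS'X'.trans Finset.sdiff_subset),
    by rw [Finset.card_union_of_disjoint hdisjSS', hScard, hS'card], ?_⟩
  have c1 : (𝒜S.card : ℝ) ≤ (ℬ.card : ℝ) := by
    have he : ℬ'.card = 𝒜S.card := Finset.card_image_of_injOn hinj
    have : 𝒜S.card ≤ ℬ.card := he ▸ Finset.card_le_card (Finset.subset_insert _ _)
    exact_mod_cast this
  calc ε * ε' * (𝒜.card : ℝ) = ε' * (ε * (𝒜.card : ℝ)) := by ring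
  _ ≤ ε' * (𝒜S.card : ℝ) := mul_le_mul_of_nonneg_left hScount hε'
  _ ≤ ε' * (ℬ.card : ℝ) := mul_le_mul_of_nonneg_left c1 hε'
  _ ≤ ((ℬ.filter fun B => k' ≤ (B ∩ S').card).card : ℝ) := hS'count
  _ ≤ _ := by exact_mod_cast hfin
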